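/- Suppose that for every unit vector u in H one has |⟨Σu,u⟩ − ⟨Σ̂u,u⟩| ≤ B(⟨Σu,u⟩) and |⟨Σu,u⟩ − ⟨Σ̂u,u⟩| ≤ B(⟨Σ̂u,u⟩). Then for every index i ≥ 1 the eigenvalues satisfy |λ_i − λ̂_i| ≤ B(λ_i) and |λ_i − λ̂_i| ≤ B(λ̂_i). -/

import Mathlib

open scoped RealInnerProductSpace

-- quadratic form formula
lemma quad_form {H : Type*} [NormedAddCommGroup H] [InnerProductSpace ℝ H] [CompleteSpace H]
    (p : HilbertBasis ℕ ℝ H) (lam : ℕ → ℝ) (hlam_sum : Summable lam)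
    (S : H →L[ℝ] H) (hS : ∀ u, S u = ∑' i, (lam i * ⟪u, p i⟫) • p i) (u : H) :
    ⟪S u, u⟫ = ∑' i, lam i * ⟪u, p i⟫ ^ 2 := by
  have hsum : Summable (fun i => (lam i * ⟪u, p i⟫) • p i) := by
    apply Summable.of_norm
    apply Summable.of_nonneg_of_le (fun i => norm_nonneg _) (fun i => ?_)
      ((hlam_sum.abs).mul_right ‖u‖)
    rw [norm_smul, Real.norm_eq_abs, abs_mul]
    have h1 : ‖p i‖ = 1 := p.orthonormal.1 i
    rw [h1, mul_one]
    exact mul_le_mul_of_nonneg_left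
      ((abs_real_inner_le_norm u (p i)).trans (by rw [h1, mul_one])) (abs_nonneg _)
  have := ((innerSL ℝ).flip u).map_tsum hsum
  rw [hS u]
  rw [show (⟪∑' i, (lam i * ⟪u, p i⟫) • p i, u⟫ : ℝ)
      = ((innerSL ℝ).flip u) (∑' i, (lam i * ⟪u, p i⟫) • p i) from rfl, this]
  congr 1
  ext i
  rw [ContinuousLinearMap.flip_apply, innerSL_apply_apply, real_inner_smul_left,
    real_inner_comm (p i) u]
  ring

lemma exists_unit_vector {H : Type*} [NormedAddCommGroup H] [InnerProductSpace ℝ H]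
    [CompleteSpace H] (p q : HilbertBasis ℕ ℝ H) (i : ℕ) :
    ∃ u : H, ‖u‖ = 1 ∧ (∀ k, i < k → ⟪u, p k⟫ = 0) ∧ (∀ k, k < i → ⟪u, q k⟫ = 0) := by
  classical
  set V : Submodule ℝ H := Submodule.span ℝ (Set.range fun j : Fin (i+1) => p j) with hV
  have hon : Orthonormal ℝ (fun j : Fin (i+1) => p (j : ℕ)) :=
    p.orthonormal.comp _ Fin.val_injective
  have hfin : FiniteDimensional ℝ V :=
    FiniteDimensional.span_of_finite ℝ (Set.finite_range _)
  have hdim : Module.finrank ℝ V = i + 1 := by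
    rw [hV, finrank_span_eq_card hon.linearIndependent]
    simp
  let φ : V →ₗ[ℝ] (Fin i → ℝ) :=
    LinearMap.pi fun j : Fin i => ((innerSL ℝ (q (j : ℕ))).toLinearMap).comp V.subtype
  have hker : LinearMap.ker φ ≠ ⊥ := by
    intro h
    have hinj : Function.Injective φ := LinearMap.ker_eq_bot.mp h
    have := LinearMap.finrank_le_finrank_of_injective hinj
    rw [hdim] at this
    simp [Module.finrank_pi] at this
  obtain ⟨x, hx, hx0⟩ := (Submodule.ne_bot_iff _).mp hker
  have hφx : ∀ j : Fin i, ⟪q (j : ℕ), (x : H)⟫ = 0 := by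
    have := (LinearMap.mem_ker).mp hx
    intro j
    have := congrFun this j
    simpa [φ] using this
  have hxne : (x : H) ≠ 0 := fun h => hx0 (Subtype.ext h)
  refine ⟨‖(x : H)‖⁻¹ • (x : H), ?_, ?_, ?_⟩
  · rw [norm_smul, norm_inv, norm_norm, inv_mul_cancel₀ (norm_ne_zero_iff.mpr hxne)]
  · intro k hk
    have hmem : (x : H) ∈ V := x.2
    have hperp : ∀ v ∈ (Set.range fun j : Fin (i+1) => p j), ⟪p k, v⟫ = 0 := by
      rintro v ⟨j, rfl⟩
      exact p.orthonormal.2 (by omega : k ≠ (j : ℕ))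
    have : V ≤ LinearMap.ker ((innerSL ℝ (p k)).toLinearMap) := by
      rw [hV, Submodule.span_le]
      rintro v ⟨j, rfl⟩
      simpa using hperp _ ⟨j, rfl⟩
    have h0 : ⟪p k, (x : H)⟫ = 0 := by simpa using this hmem
    rw [real_inner_smul_left, real_inner_comm, h0, mul_zero]
  · intro k hk
    rw [real_inner_smul_left, real_inner_comm, hφx ⟨k, hk⟩, mul_zero]

section
variable {H : Type*} [NormedAddCommGroup H] [InnerProductSpace ℝ H] [CompleteSpace H]

lemma key_step (p q : HilbertBasis ℕ ℝ H) (lam lamh : ℕ → ℝ)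
    (hlam_anti : Antitone lam)
    (hlam_sum : Summable lam)
    (hlamh_anti : Antitone lamh) (hlamh_nonneg : ∀ i, 0 ≤ lamh i)
    (hlamh_sum : Summable lamh)
    (S Sh : H →L[ℝ] H)
    (hS : ∀ u, S u = ∑' i, (lam i * ⟪u, p i⟫) • p i)
    (hSh : ∀ u, Sh u = ∑' i, (lamh i * ⟪u, q i⟫) • q i)
    (B : ℝ → ℝ)
    (hB_mono : ∀ s t, 0 ≤ s → s ≤ t → B s ≤ B t)
    (hbound : ∀ u : H, ‖u‖ = 1 → |⟪S u, u⟫ - ⟪Sh u, u⟫| ≤ B ⟪Sh u, u⟫)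
    (i : ℕ) : lam i - lamh i ≤ B (lamh i) := by
  obtain ⟨u, hu1, hup, huq⟩ := exists_unit_vector p q i
  have hpar_p : HasSum (fun k => ⟪u, p k⟫ ^ 2) 1 := by
    have := p.hasSum_inner_mul_inner u u
    rw [real_inner_self_eq_norm_sq, hu1] at this
    simpa [sq, real_inner_comm] using this
  have hpar_q : HasSum (fun k => ⟪u, q k⟫ ^ 2) 1 := by
    have := q.hasSum_inner_mul_inner u u
    rw [real_inner_self_eq_norm_sq, hu1] at this
    simpa [sq, real_inner_comm] using this
  -- lower bound: lam i ≤ ⟪S u, u⟫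
  have hlow : lam i ≤ ⟪S u, u⟫ := by
    rw [quad_form p lam hlam_sum S hS u]
    have hz : ∀ k ∉ Finset.range (i+1), lam k * ⟪u, p k⟫ ^ 2 = 0 := by
      intro k hk
      rw [Finset.mem_range, not_lt] at hk
      rw [hup k (by omega), zero_pow (by norm_num), mul_zero]
    rw [tsum_eq_sum hz]
    have hsq1 : ∑ k ∈ Finset.range (i+1), ⟪u, p k⟫ ^ 2 = 1 := by
      have hz' : ∀ k ∉ Finset.range (i+1), ⟪u, p k⟫ ^ 2 = 0 := by
        intro k hk
        rw [Finset.mem_range, not_lt] at hk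
        rw [hup k (by omega), zero_pow (by norm_num)]
      rw [← (tsum_eq_sum hz' : ∑' k, ⟪u, p k⟫ ^ 2 = _), hpar_p.tsum_eq]
    calc lam i = lam i * ∑ k ∈ Finset.range (i+1), ⟪u, p k⟫ ^ 2 := by rw [hsq1, mul_one]
      _ = ∑ k ∈ Finset.range (i+1), lam i * ⟪u, p k⟫ ^ 2 := Finset.mul_sum _ _ _
      _ ≤ ∑ k ∈ Finset.range (i+1), lam k * ⟪u, p k⟫ ^ 2 := by
          apply Finset.sum_le_sum
          intro k hk
          rw [Finset.mem_range] at hk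
          exact mul_le_mul_of_nonneg_right (hlam_anti (by omega)) (sq_nonneg _)
  -- upper bound: ⟪Sh u, u⟫ ≤ lamh i, and nonneg
  have hqf := quad_form q lamh hlamh_sum Sh hSh u
  have hfle : ∀ k, lamh k * ⟪u, q k⟫ ^ 2 ≤ lamh i * ⟪u, q k⟫ ^ 2 := by
    intro k
    rcases lt_or_ge k i with h | h
    · rw [huq k h, zero_pow (by norm_num), mul_zero, mul_zero]
    · exact mul_le_mul_of_nonneg_right (hlamh_anti h) (sq_nonneg _)
  have hfnn : ∀ k, 0 ≤ lamh k * ⟪u, q k⟫ ^ 2 :=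
    fun k => mul_nonneg (hlamh_nonneg k) (sq_nonneg _)
  have hgsum : Summable (fun k => lamh i * ⟪u, q k⟫ ^ 2) := hpar_q.summable.mul_left _
  have hfsum : Summable (fun k => lamh k * ⟪u, q k⟫ ^ 2) :=
    Summable.of_nonneg_of_le hfnn hfle hgsum
  have hhigh : ⟪Sh u, u⟫ ≤ lamh i := by
    rw [hqf]
    calc ∑' k, lamh k * ⟪u, q k⟫ ^ 2 ≤ ∑' k, lamh i * ⟪u, q k⟫ ^ 2 :=
          Summable.tsum_le_tsum hfle hfsum hgsum
      _ = lamh i * ∑' k, ⟪u, q k⟫ ^ 2 := tsum_mul_left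
      _ = lamh i := by rw [hpar_q.tsum_eq, mul_one]
  have hnn : 0 ≤ ⟪Sh u, u⟫ := by
    rw [hqf]; exact tsum_nonneg hfnn
  calc lam i - lamh i ≤ ⟪S u, u⟫ - ⟪Sh u, u⟫ := by linarith
    _ ≤ |⟪S u, u⟫ - ⟪Sh u, u⟫| := le_abs_self _
    _ ≤ B ⟪Sh u, u⟫ := hbound u hu1
    _ ≤ B (lamh i) := hB_mono _ _ hnn hhigh

end

/-- If the quadratic forms of `Σ` and `Σ̂` are uniformly close on the unit sphere,
with accuracy `B` evaluated either at `⟪Σu,u⟫` or at `⟪Σ̂u,u⟫`, then the (nonincreasing)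
eigenvalues satisfy `|λ_i - λ̂_i| ≤ B(λ_i)` and `|λ_i - λ̂_i| ≤ B(λ̂_i)`. -/
theorem robust_pca_eigenvalue_bound
    {H : Type*} [NormedAddCommGroup H] [InnerProductSpace ℝ H] [CompleteSpace H]
    (p q : HilbertBasis ℕ ℝ H)
    (lam lamh : ℕ → ℝ)
    (hlam_anti : Antitone lam) (hlam_nonneg : ∀ i, 0 ≤ lam i)
    (hlam_sum : Summable lam)
    (hlamh_anti : Antitone lamh) (hlamh_nonneg : ∀ i, 0 ≤ lamh i)
    (hlamh_sum : Summable lamh)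
    (S Sh : H →L[ℝ] H)
    (hS : ∀ u, S u = ∑' i, (lam i * ⟪u, p i⟫) • p i)
    (hSh : ∀ u, Sh u = ∑' i, (lamh i * ⟪u, q i⟫) • q i)
    (B : ℝ → ℝ)
    (hB_nonneg : ∀ t, 0 ≤ t → 0 ≤ B t)
    (hB_mono : ∀ s t, 0 ≤ s → s ≤ t → B s ≤ B t)
    (hB_half : ∀ t a, 0 ≤ t → 0 ≤ a → B (t + a) ≤ B t + a / 2)
    (hbound : ∀ u : H, ‖u‖ = 1 →
      |⟪S u, u⟫ - ⟪Sh u, u⟫| ≤ B ⟪S u, u⟫ ∧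
      |⟪S u, u⟫ - ⟪Sh u, u⟫| ≤ B ⟪Sh u, u⟫) :
    ∀ i : ℕ, |lam i - lamh i| ≤ B (lam i) ∧ |lam i - lamh i| ≤ B (lamh i) := by
  intro i
  have h1 : lam i - lamh i ≤ B (lamh i) :=
    key_step p q lam lamh hlam_anti hlam_sum hlamh_anti hlamh_nonneg hlamh_sum
      S Sh hS hSh B hB_mono (fun u hu => (hbound u hu).2) i
  have h2 : lamh i - lam i ≤ B (lam i) :=
    key_step q p lamh lam hlamh_anti hlamh_sum hlam_anti hlam_nonneg hlam_sum
      Sh S hSh hS B hB_mono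
      (fun u hu => by rw [abs_sub_comm]; exact (hbound u hu).1) i
  rcases le_total (lamh i) (lam i) with h | h
  · have habs : |lam i - lamh i| = lam i - lamh i := abs_of_nonneg (by linarith)
    rw [habs]
    exact ⟨h1.trans (hB_mono _ _ (hlamh_nonneg i) h), h1⟩
  · have habs : |lam i - lamh i| = lamh i - lam i := by
      rw [abs_sub_comm]; exact abs_of_nonneg (by linarith)
    rw [habs]
    exact ⟨h2, h2.trans (hB_mono _ _ (hlam_nonneg i) h)⟩
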